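/- Under the viscous approximation setup, for each t > 0 the following identity holds: ε²‖∂²ₓₓP(t,·)‖²_{L²(0,∞)} + ε(∂ₓP(t,0))² + ‖∂ₓP(t,·)‖²_{L²(0,∞)} = ‖u(t,·)‖²_{L²(0,∞)}. -/

import Mathlib

open MeasureTheory Set Filter

theorem stmt0
    (ε γ : ℝ) (hε : 0 < ε) (hε1 : ε < 1) (hγ : 0 < γ)
    (u P ut ux uxx Px Pxx : ℝ → ℝ → ℝ) (gε u0 : ℝ → ℝ)
    (hut : ∀ t x : ℝ, HasDerivAt (fun s => u s x) (ut t x) t)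
    (hux : ∀ t x : ℝ, HasDerivAt (fun y => u t y) (ux t x) x)
    (huxx : ∀ t x : ℝ, HasDerivAt (fun y => ux t y) (uxx t x) x)
    (hPx : ∀ t x : ℝ, HasDerivAt (fun y => P t y) (Px t x) x)
    (hPxx : ∀ t x : ℝ, HasDerivAt (fun y => Px t y) (Pxx t x) x)
    (heq1 : ∀ t x : ℝ, 0 < t → 0 < x →
      ut t x + u t x * ux t x = γ * P t x + ε * uxx t x)
    (heq2 : ∀ t x : ℝ, 0 < t → 0 < x →
      -(ε * Pxx t x) + Px t x = u t x)
    (hbu : ∀ t : ℝ, 0 < t → u t 0 = gε t)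
    (hbP : ∀ t : ℝ, 0 < t → P t 0 = 0)
    (hinit : ∀ x : ℝ, u 0 x = u0 x)
    (hu2 : ∀ t : ℝ, IntegrableOn (fun x => (u t x)^2) (Ioi 0))
    (hux2 : ∀ t : ℝ, IntegrableOn (fun x => (ux t x)^2) (Ioi 0))
    (hP2 : ∀ t : ℝ, IntegrableOn (fun x => (P t x)^2) (Ioi 0))
    (hPx2 : ∀ t : ℝ, IntegrableOn (fun x => (Px t x)^2) (Ioi 0))
    (hPxx2 : ∀ t : ℝ, IntegrableOn (fun x => (Pxx t x)^2) (Ioi 0))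
    (hu1 : ∀ t : ℝ, IntegrableOn (fun x => u t x) (Ioi 0))
    (hud : ∀ t : ℝ, Tendsto (fun x => u t x) atTop (nhds 0))
    (huxd : ∀ t : ℝ, Tendsto (fun x => ux t x) atTop (nhds 0))
    (hPd : ∀ t : ℝ, Tendsto (fun x => P t x) atTop (nhds 0))
    (hPxd : ∀ t : ℝ, Tendsto (fun x => Px t x) atTop (nhds 0))
    :
    ∀ t : ℝ, 0 < t →
      ε^2 * (∫ x in Ioi (0:ℝ), (Pxx t x)^2) + ε * (Px t 0)^2
          + (∫ x in Ioi (0:ℝ), (Px t x)^2)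
        = ∫ x in Ioi (0:ℝ), (u t x)^2 := by
  intro t ht
  have hPxcont : Continuous (Px t) := by
    rw [continuous_iff_continuousAt]; intro x; exact (hPxx t x).continuousAt
  have hPxxeq : Pxx t = deriv (fun y => Px t y) := by
    funext x; exact ((hPxx t x).deriv).symm
  have hPxxm : Measurable (Pxx t) := by rw [hPxxeq]; exact measurable_deriv _
  have hint : IntegrableOn (fun x => Px t x * Pxx t x) (Ioi 0) := by
    apply Integrable.mono' (((hPx2 t).add (hPxx2 t)).div_const 2)
    · exact (hPxcont.measurable.mul hPxxm).aestronglyMeasurable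
    · filter_upwards with x
      have h1 : |Px t x * Pxx t x| = |Px t x| * |Pxx t x| := abs_mul _ _
      have h2 : |Px t x|^2 = (Px t x)^2 := sq_abs _
      have h3 : |Pxx t x|^2 = (Pxx t x)^2 := sq_abs _
      simp only [Real.norm_eq_abs, Pi.add_apply]
      nlinarith [sq_nonneg (|Px t x| - |Pxx t x|)]
  have hFTC : ∫ x in Ioi (0:ℝ), Px t x * Pxx t x = 0 - (Px t 0)^2 / 2 := by
    apply integral_Ioi_of_hasDerivAt_of_tendsto (f := fun x => (Px t x)^2 / 2)
    · exact ((hPxcont.pow 2).div_const 2).continuousWithinAt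
    · intro x _
      have h : HasDerivAt (fun y => (Px t y)^2 / 2) ((2:ℕ) * Px t x ^ (2 - 1) * Pxx t x / 2) x :=
        ((hPxx t x).pow 2).div_const 2
      refine h.congr_deriv ?_
      ring
    · exact hint
    · have := ((hPxd t).pow 2).div_const 2
      simpa using this
  have hcongr : ∫ x in Ioi (0:ℝ), (u t x)^2
      = ∫ x in Ioi (0:ℝ), (ε^2 * (Pxx t x)^2 - 2*ε*(Px t x * Pxx t x) + (Px t x)^2) := by
    apply setIntegral_congr_fun measurableSet_Ioi
    intro x hx
    have h2 := heq2 t x ht hx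
    dsimp only
    rw [← h2]; ring
  have hA : IntegrableOn (fun x => ε^2 * (Pxx t x)^2) (Ioi 0) := (hPxx2 t).const_mul _
  have hB : IntegrableOn (fun x => 2*ε*(Px t x * Pxx t x)) (Ioi 0) := hint.const_mul _
  have hAB : IntegrableOn (fun x => ε^2 * (Pxx t x)^2 - 2*ε*(Px t x * Pxx t x)) (Ioi 0) :=
    hA.sub hB
  rw [hcongr, integral_add hAB (hPx2 t), integral_sub hA hB,
    integral_const_mul, integral_const_mul, hFTC]
  ring
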